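/- arXiv:2507.12654 — 2 statements merged into one kernel-verified Lean document; each statement's English description precedes it below -/
import Mathlib

section
/- Let 0 ≤ s < d and write ε = λ + 2. With T_n = n(n+1)/2 and s + kd ≥ T_d, the 2(k+d+1) inequalities defining the cycle 𝒞_{s,d,k} (namely 0 ≤ s+(i-1)d + (-2+ε)(s+id) + s+(i+1)d < 1 for 0 ≤ i ≤ k, 0 ≤ s+kd+(T_d-T_{d-j+1}) + (-2+ε)(s+kd+(T_d-T_{d-j})) + s+kd+(T_d-T_{d-j-1}) < 1 for 1 ≤ j ≤ d, and 0 ≤ s-(T_d-T_{d-j+1}) + (-2+ε)(s-(T_d-T_{d-j})) + s-(T_d-T_{d-j-1}) < 1 for 1 ≤ j ≤ d) all hold if and only if 1/(s+(k+1)d) ≤ ε < 1/(s+kd). -/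
/-- Triangular numbers extended to `ℤ`. -/
def T (n : ℤ) : ℤ := n * (n + 1) / 2

lemma two_T (n : ℤ) : 2 * T n = n * (n + 1) := by
  have h : (2:ℤ) ∣ n * (n + 1) := (Int.even_mul_succ_self n).two_dvd
  exact Int.mul_ediv_cancel' h

lemma T_id (n : ℤ) : T (n - 1) - 2 * T n + T (n + 1) = 1 := by
  have h1 := two_T (n - 1); have h2 := two_T n; have h3 := two_T (n + 1)
  nlinarith

lemma T_mono {a b : ℤ} (ha : 0 ≤ a) (hab : a ≤ b) : T a ≤ T b := by
  have h1 := two_T a; have h2 := two_T b; nlinarith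

theorem stmt13 (s d k : ℤ) (hs : 0 ≤ s) (hsd : s < d) (hk : T d ≤ s + k * d)
    (ε : ℝ) :
    ((∀ i : ℤ, 0 ≤ i → i ≤ k →
        0 ≤ ((s + (i - 1) * d : ℤ) : ℝ) + (-2 + ε) * ((s + i * d : ℤ) : ℝ)
            + ((s + (i + 1) * d : ℤ) : ℝ) ∧
        ((s + (i - 1) * d : ℤ) : ℝ) + (-2 + ε) * ((s + i * d : ℤ) : ℝ)
            + ((s + (i + 1) * d : ℤ) : ℝ) < 1) ∧
     (∀ j : ℤ, 1 ≤ j → j ≤ d →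
        0 ≤ ((s + k * d + (T d - T (d - j + 1)) : ℤ) : ℝ)
            + (-2 + ε) * ((s + k * d + (T d - T (d - j)) : ℤ) : ℝ)
            + ((s + k * d + (T d - T (d - j - 1)) : ℤ) : ℝ) ∧
        ((s + k * d + (T d - T (d - j + 1)) : ℤ) : ℝ)
            + (-2 + ε) * ((s + k * d + (T d - T (d - j)) : ℤ) : ℝ)
            + ((s + k * d + (T d - T (d - j - 1)) : ℤ) : ℝ) < 1) ∧
     (∀ j : ℤ, 1 ≤ j → j ≤ d →
        0 ≤ ((s - (T d - T (d - j + 1)) : ℤ) : ℝ)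
            + (-2 + ε) * ((s - (T d - T (d - j)) : ℤ) : ℝ)
            + ((s - (T d - T (d - j - 1)) : ℤ) : ℝ) ∧
        ((s - (T d - T (d - j + 1)) : ℤ) : ℝ)
            + (-2 + ε) * ((s - (T d - T (d - j)) : ℤ) : ℝ)
            + ((s - (T d - T (d - j - 1)) : ℤ) : ℝ) < 1)) ↔
    (1 / (((s + (k + 1) * d : ℤ) : ℝ)) ≤ ε ∧ ε < 1 / (((s + k * d : ℤ) : ℝ))) := by
  -- basic integer facts
  have hd : (1:ℤ) ≤ d := by omega
  have hTd : d ≤ T d := by have := two_T d; nlinarith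
  have hskd : d ≤ s + k * d := le_trans hTd hk
  have hk0 : 1 ≤ k := by nlinarith
  have hskdpos : (0:ℝ) < ((s + k * d : ℤ) : ℝ) := by
    have : (0:ℤ) < s + k * d := by omega
    exact_mod_cast this
  have hsk1pos : (0:ℝ) < ((s + (k + 1) * d : ℤ) : ℝ) := by
    have : (0:ℤ) < s + (k + 1) * d := by nlinarith
    exact_mod_cast this
  have hTd1 : T d - T (d - 1) = d := by
    have h1 := two_T d; have h2 := two_T (d - 1); nlinarith
  constructor
  · rintro ⟨h1, h2, h3⟩
    have A := h1 k (by omega) le_rfl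
    have B := h2 1 le_rfl hd
    have hA2 : ε * ((s + k * d : ℤ) : ℝ) < 1 := by
      have := A.2; push_cast at this ⊢; nlinarith
    have key : T (d - 1 - 1) - 2 * T (d - 1) + T d = 1 := by
      have := T_id (d - 1); simpa using this
    have hB1 : 1 ≤ ε * ((s + (k + 1) * d : ℤ) : ℝ) := by
      have hB := B.1
      have e2 : (s + k * d + (T d - T (d - 1)) : ℤ) = s + (k + 1) * d := by
        linear_combination hTd1
      have e3 : (s + k * d + (T d - T (d - 1 - 1)) : ℤ) = s + (k + 2) * d - 1 := by
        linear_combination -key + 2 * hTd1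
      rw [e2, e3] at hB
      have e1' : (d - 1 + 1 : ℤ) = d := by ring
      rw [e1'] at hB
      push_cast at hB ⊢
      nlinarith
    refine ⟨?_, ?_⟩
    · rw [div_le_iff₀ hsk1pos]; linarith [hB1]
    · rw [lt_div_iff₀ hskdpos]; linarith [hA2]
  · rintro ⟨hl, hr⟩
    have hl' : 1 ≤ ε * ((s + (k + 1) * d : ℤ) : ℝ) := by
      rw [div_le_iff₀ hsk1pos] at hl; linarith
    have hr' : ε * ((s + k * d : ℤ) : ℝ) < 1 := by
      rw [lt_div_iff₀ hskdpos] at hr; linarith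
    have hε : 0 < ε := by nlinarith
    have hl'' : 1 ≤ ε * ((s:ℝ) + (k + 1) * d) := by push_cast at hl'; convert hl' using 2
    have hr'' : ε * ((s:ℝ) + k * d) < 1 := by push_cast at hr'; convert hr' using 2
    refine ⟨?_, ?_, ?_⟩
    · intro i hi0 hik
      have hb0 : (0:ℤ) ≤ s + i * d := by nlinarith
      have hb1 : s + i * d ≤ s + k * d := by nlinarith
      have hb0' : (0:ℝ) ≤ (s:ℝ) + i * d := by exact_mod_cast hb0
      have hb1' : (s:ℝ) + i * d ≤ (s:ℝ) + k * d := by exact_mod_cast hb1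
      have h1 : 0 ≤ ε * ((s:ℝ) + i * d) := mul_nonneg hε.le hb0'
      have h2 : ε * ((s:ℝ) + i * d) ≤ ε * ((s:ℝ) + k * d) :=
        mul_le_mul_of_nonneg_left hb1' hε.le
      constructor
      · push_cast; nlinarith
      · push_cast; nlinarith
    · intro j hj1 hjd
      have hmono : T (d - j) ≤ T (d - 1) := T_mono (by omega) (by omega)
      have hT0 : (0:ℤ) ≤ T (d - j) := by
        have := T_mono (le_refl (0:ℤ)) (show (0:ℤ) ≤ d - j by omega)
        simpa [T] using this
      have hblo : s + (k + 1) * d ≤ s + k * d + (T d - T (d - j)) := by nlinarith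
      have hbhi : s + k * d + (T d - T (d - j)) ≤ 2 * (s + k * d) := by linarith
      have key := T_id (d - j)
      have keyR : ((T (d - j - 1) : ℤ) : ℝ) - 2 * ((T (d - j) : ℤ) : ℝ)
          + ((T (d - j + 1) : ℤ) : ℝ) = 1 := by exact_mod_cast key
      have hbloR : ((s:ℝ) + (k + 1) * d) ≤ (s:ℝ) + k * d + ((T d : ℤ) - (T (d - j) : ℤ) : ℤ) := by
        exact_mod_cast hblo
      have hbhiR : (s:ℝ) + k * d + ((T d : ℤ) - (T (d - j) : ℤ) : ℤ) ≤ 2 * ((s:ℝ) + k * d) := by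
        exact_mod_cast hbhi
      set B : ℝ := (s:ℝ) + k * d + ((T d : ℤ) - (T (d - j) : ℤ) : ℤ) with hB
      have hεlo : 1 ≤ ε * B := le_trans hl'' (mul_le_mul_of_nonneg_left hbloR hε.le)
      have hεhi : ε * B < 2 := by
        have := mul_le_mul_of_nonneg_left hbhiR hε.le
        nlinarith
      have hBc : B = (s:ℝ) + k * d + (((T d : ℤ) : ℝ) - ((T (d - j) : ℤ) : ℝ)) := by
        rw [hB]; push_cast; ring
      rw [hBc] at hεlo hεhi
      constructor
      · push_cast; linarith [keyR, hεlo]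
      · push_cast; linarith [keyR, hεhi]
    · intro j hj1 hjd
      have hmono : T (d - j) ≤ T (d - 1) := T_mono (by omega) (by omega)
      have hT0 : (0:ℤ) ≤ T (d - j) := by
        have := T_mono (le_refl (0:ℤ)) (show (0:ℤ) ≤ d - j by omega)
        simpa [T] using this
      have hbhi : s - (T d - T (d - j)) ≤ -1 := by linarith
      have hblo : -(s + k * d) ≤ s - (T d - T (d - j)) := by linarith
      have key := T_id (d - j)
      have keyR : ((T (d - j - 1) : ℤ) : ℝ) - 2 * ((T (d - j) : ℤ) : ℝ)
          + ((T (d - j + 1) : ℤ) : ℝ) = 1 := by exact_mod_cast key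
      have hbhiR : ((s - (T d - T (d - j)) : ℤ) : ℝ) ≤ -1 := by exact_mod_cast hbhi
      have hbloR : -((s + k * d : ℤ) : ℝ) ≤ ((s - (T d - T (d - j)) : ℤ) : ℝ) := by
        exact_mod_cast hblo
      have hεhi : ε * ((s - (T d - T (d - j)) : ℤ) : ℝ) ≤ -ε := by
        have h := mul_le_mul_of_nonneg_left hbhiR hε.le
        rw [mul_neg_one] at h
        exact h
      have hεlo : -1 < ε * ((s - (T d - T (d - j)) : ℤ) : ℝ) := by
        have h1 : ε * (-((s - (T d - T (d - j)) : ℤ) : ℝ)) ≤ ε * ((s + k * d : ℤ) : ℝ) :=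
          mul_le_mul_of_nonneg_left (by linarith) hε.le
        rw [mul_neg] at h1
        linarith [hr']
      constructor
      · push_cast at hεlo ⊢; linarith [keyR, hεlo]
      · push_cast at hεhi ⊢; linarith [keyR, hεhi, hε]
end

section
/- Let a₀, a₁ < 0 be integers, t = |a₀ - a₁|, m = max(a₀, a₁), and r = min{ℓ ≥ 0 : m + ℓt + T_ℓ ≥ 0} where T_ℓ = ℓ(ℓ+1)/2. Set s = m + rt + T_r and d = t + r. Then 0 ≤ s < d (assuming (a₀,a₁) is not of the form (m,m) with this construction yielding d > 0), and moreover r = ⌈(-1 - 2t + √((2t+1)² - 8m))/2⌉. -/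
theorem stmt16 (a0 a1 : ℤ) (h0 : a0 < 0) (h1 : a1 < 0)
    (t m : ℤ) (ht : t = |a0 - a1|) (hm : m = max a0 a1)
    (r : ℤ) (hr : IsLeast {l : ℤ | 0 ≤ l ∧ 0 ≤ m + l * t + T l} r)
    (s d : ℤ) (hsdef : s = m + r * t + T r) (hddef : d = t + r) :
    (0 ≤ s ∧ s < d) ∧
    r = ⌈((-1 - 2 * (t : ℝ) + Real.sqrt ((2 * (t : ℝ) + 1) ^ 2 - 8 * (m : ℝ))) / 2)⌉ := by
  have ht0 : 0 ≤ t := ht ▸ abs_nonneg _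
  have hm0 : m < 0 := by rw [hm]; exact max_lt h0 h1
  have hr0 : 0 ≤ r := hr.1.1
  have hs0 : 0 ≤ s := hsdef ▸ hr.1.2
  have hT0 : T 0 = 0 := by decide
  have hr1 : 1 ≤ r := by
    rcases lt_or_ge r 1 with h | h
    · exfalso
      have hre : r = 0 := le_antisymm (by omega) hr0
      have h2 := hr.1.2
      rw [hre, hT0] at h2
      omega
    · exact h
  have hprev : m + (r - 1) * t + T (r - 1) < 0 := by
    by_contra h
    push_neg at h
    have : r ≤ r - 1 := hr.2 ⟨by omega, h⟩
    omega
  have h2Tr : 2 * T r = r * (r + 1) := two_T r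
  have h2Tr1 : 2 * T (r - 1) = (r - 1) * r := by
    have := two_T (r - 1); linarith [this]
  -- first part
  have hsd : s < d := by
    have hstep2 : 2 * T r = 2 * T (r - 1) + 2 * r := by linear_combination h2Tr - h2Tr1
    have hstep : T r = T (r - 1) + r := by omega
    have hx : (r - 1) * t = r * t - t := by ring
    omega
  refine ⟨⟨hs0, hsd⟩, ?_⟩
  -- second part
  have hA : ((2 * r + 2 * t + 1 : ℤ) : ℝ) ^ 2 = (2 * (t : ℝ) + 1) ^ 2 - 8 * m + 8 * s := by
    push_cast
    have hs' : (s : ℝ) = m + r * t + T r := by exact_mod_cast hsdef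
    have h2 : (2 : ℝ) * T r = r * (r + 1) := by exact_mod_cast h2Tr
    linear_combination (-8 : ℝ) * hs' + (-4 : ℝ) * h2
  have hB : ((2 * r + 2 * t - 1 : ℤ) : ℝ) ^ 2
      = (2 * (t : ℝ) + 1) ^ 2 - 8 * m + 8 * (m + (r - 1) * t + T (r - 1)) := by
    push_cast
    have h2 : (2 : ℝ) * T (r - 1) = (r - 1) * r := by exact_mod_cast h2Tr1
    linear_combination (-4 : ℝ) * h2
  set D : ℝ := (2 * (t : ℝ) + 1) ^ 2 - 8 * (m : ℝ) with hD
  have hsq1 : Real.sqrt D ≤ 2 * r + 2 * t + 1 := by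
    have h1' : D ≤ ((2 * r + 2 * t + 1 : ℤ) : ℝ) ^ 2 := by
      rw [hA]
      have : (0 : ℝ) ≤ 8 * s := by positivity
      linarith
    have h2' : (0 : ℝ) ≤ ((2 * r + 2 * t + 1 : ℤ) : ℝ) := by
      push_cast
      have hrr : (1 : ℝ) ≤ (r : ℝ) := by exact_mod_cast hr1
      have htt : (0 : ℝ) ≤ (t : ℝ) := by exact_mod_cast ht0
      linarith
    calc Real.sqrt D ≤ Real.sqrt (((2 * r + 2 * t + 1 : ℤ) : ℝ) ^ 2) :=
          Real.sqrt_le_sqrt h1'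
      _ = ((2 * r + 2 * t + 1 : ℤ) : ℝ) := by rw [Real.sqrt_sq h2']
      _ = 2 * r + 2 * t + 1 := by push_cast; ring
  have hsq2 : (2 * (r : ℝ) + 2 * t - 1) < Real.sqrt D := by
    have hnn : (0 : ℝ) ≤ 2 * (r : ℝ) + 2 * t - 1 := by
      have : (1 : ℝ) ≤ r := by exact_mod_cast hr1
      have : (0 : ℝ) ≤ t := by exact_mod_cast ht0
      linarith [show (1:ℝ) ≤ (r:ℝ) from by exact_mod_cast hr1]
    rw [show (2 * (r : ℝ) + 2 * t - 1) = ((2 * r + 2 * t - 1 : ℤ) : ℝ) by push_cast; ring]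
    rw [Real.lt_sqrt (by exact_mod_cast hnn)]
    rw [hB]
    have hP : ((m + (r - 1) * t + T (r - 1) : ℤ) : ℝ) ≤ -1 := by
      exact_mod_cast (show m + (r - 1) * t + T (r - 1) ≤ -1 by omega)
    push_cast at hP
    linarith
  symm
  rw [Int.ceil_eq_iff]
  constructor
  · linarith
  · linarith
end
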